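/- Let R be a unique factorization domain with fraction field L, and let f₁ ∈ R[x₁] and f₂ ∈ R[x₂] be monic polynomials of positive degree. Set T = R[x₁,x₂]/(f₁(x₁), f₂(x₂)), E = L[x₁]/(f₁), and F = E[x₂]/(f₂). Then T is an integral domain if and only if both E and F are fields; that is, if and only if f₁ is irreducible in L[x₁] and f₂ is irreducible in E[x₂]. -/

import Mathlib

set_option linter.unusedSectionVars false
set_option linter.unusedVariables false


open Polynomial

noncomputable section

/-- `T = R[x₁,x₂]/(f₁(x₁), f₂(x₂))`. -/
abbrev Tring (R : Type) [CommRing R] (f₁ f₂ : R[X]) : Type :=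
  MvPolynomial (Fin 2) R ⧸
    (Ideal.span {Polynomial.aeval (MvPolynomial.X 0) f₁,
      Polynomial.aeval (MvPolynomial.X 1) f₂} : Ideal (MvPolynomial (Fin 2) R))

/-- `f₁` viewed in `L[x₁]`. -/
abbrev f₁L (R L : Type) [CommRing R] [Field L] [Algebra R L] (f₁ : R[X]) : L[X] :=
  f₁.map (algebraMap R L)

/-- `E = L[x₁]/(f₁)`. -/
abbrev Ering (R L : Type) [CommRing R] [Field L] [Algebra R L] (f₁ : R[X]) : Type :=
  L[X] ⧸ (Ideal.span {f₁L R L f₁} : Ideal L[X])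

/-- The canonical map `R → E`. -/
abbrev toE (R L : Type) [CommRing R] [Field L] [Algebra R L] (f₁ : R[X]) :
    R →+* Ering R L f₁ :=
  (Ideal.Quotient.mk _).comp ((Polynomial.C : L →+* L[X]).comp (algebraMap R L))

/-- `f₂` viewed in `E[x₂]`. -/
abbrev f₂E (R L : Type) [CommRing R] [Field L] [Algebra R L] (f₁ f₂ : R[X]) :
    (Ering R L f₁)[X] :=
  f₂.map (toE R L f₁)

/-- `F = E[x₂]/(f₂)`. -/
abbrev Fring (R L : Type) [CommRing R] [Field L] [Algebra R L] (f₁ f₂ : R[X]) : Type :=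
  (Ering R L f₁)[X] ⧸ (Ideal.span {f₂E R L f₁ f₂} : Ideal (Ering R L f₁)[X])

instance Ering.instCommRing (R L : Type) [CommRing R] [Field L] [Algebra R L] (f₁ : R[X]) :
    CommRing (Ering R L f₁) :=
  Ideal.Quotient.commRing _

section Abstract
variable {R L S F : Type*} {ι : Type*} [CommRing R] [IsDomain R] [Field L]
  [Algebra R L] [IsFractionRing R L] [CommRing S] [CommRing F]
  [Algebra R S] [Algebra L F] [Fintype ι]

theorem aux_inj (ψ : S →+* F) (b : Module.Basis ι R S) (c : Module.Basis ι L F)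
    (hψ : ∀ (r : R) (x : S), ψ (r • x) = algebraMap R L r • ψ x)
    (hb : ∀ i, ψ (b i) = c i) : Function.Injective ψ := by
  have hrep : ∀ x : S, ψ x = ∑ i, algebraMap R L (b.repr x i) • c i := fun x => by
    conv_lhs => rw [← b.sum_repr x]
    rw [map_sum]
    exact Finset.sum_congr rfl fun i _ => by rw [hψ, hb]
  rw [injective_iff_map_eq_zero]
  intro s hs
  rw [hrep] at hs
  have h0 := Fintype.linearIndependent_iff.mp c.linearIndependent _ hs
  have h1 : ∀ i, b.repr s i = 0 := fun i =>
    IsFractionRing.injective R L (by rw [h0 i, map_zero])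
  have h2 : b.repr s = 0 := Finsupp.ext h1
  exact b.repr.map_eq_zero_iff.mp h2

theorem aux_denom (ψ : S →+* F) (b : Module.Basis ι R S) (c : Module.Basis ι L F)
    (hψ : ∀ (r : R) (x : S), ψ (r • x) = algebraMap R L r • ψ x)
    (hb : ∀ i, ψ (b i) = c i) (z : F) :
    ∃ r : R, r ≠ 0 ∧ ∃ t : S, algebraMap R L r • z = ψ t := by
  obtain ⟨d, hd⟩ := IsLocalization.exist_integer_multiples_of_finite
      (nonZeroDivisors R) (fun i : ι => c.repr z i)
  have hd' : ∀ i : ι, ∃ a : R, algebraMap R L a = (d : R) • c.repr z i := fun i => hd i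
  choose a ha using hd'
  refine ⟨d, nonZeroDivisors.ne_zero d.2, ∑ i, a i • b i, ?_⟩
  have : ψ (∑ i, a i • b i) = ∑ i, algebraMap R L (a i) • c i := by
    rw [map_sum]
    exact Finset.sum_congr rfl fun i _ => by rw [hψ, hb]
  rw [this]
  conv_lhs => rw [← c.sum_repr z]
  rw [Finset.smul_sum]
  refine Finset.sum_congr rfl fun i _ => ?_
  rw [smul_smul, ha i, Algebra.smul_def (R := R) (d : R) (c.repr z i), Algebra.smul_def]

end Abstract

section Concrete
open AdjoinRoot

variable (R L : Type) [CommRing R] [IsDomain R] [Field L] [Algebra R L] [IsFractionRing R L]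
variable (f₁ f₂ : R[X])

/-- `f₂` viewed over `AdjoinRoot f₁`. -/
abbrev g2 : (AdjoinRoot f₁)[X] := f₂.map (algebraMap R (AdjoinRoot f₁))

/-- `f₂` viewed over `AdjoinRoot (f₁L)` (defeq to `f₂E`). -/
abbrev F2E : (AdjoinRoot (f₁L R L f₁))[X] :=
  f₂.map ((AdjoinRoot.of (f₁L R L f₁)).comp (algebraMap R L))

lemma F2E_eq : F2E R L f₁ f₂ = f₂E R L f₁ f₂ := rfl

/-- The map `R[x₁]/(f₁) → L[x₁]/(f₁)`. -/
def psi1 : AdjoinRoot f₁ →+* AdjoinRoot (f₁L R L f₁) :=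
  AdjoinRoot.lift ((AdjoinRoot.of _).comp (algebraMap R L)) (AdjoinRoot.root _)
    (by rw [← Polynomial.eval₂_map]; exact AdjoinRoot.eval₂_root _)

@[simp] lemma psi1_root : psi1 R L f₁ (root f₁) = root (f₁L R L f₁) :=
  AdjoinRoot.lift_root _

@[simp] lemma psi1_of (r : R) :
    psi1 R L f₁ (of f₁ r) = of (f₁L R L f₁) (algebraMap R L r) :=
  AdjoinRoot.lift_of _

lemma psi1_comp_of :
    (psi1 R L f₁).comp (of f₁) = (AdjoinRoot.of (f₁L R L f₁)).comp (algebraMap R L) :=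
  AdjoinRoot.lift_comp_of _

lemma g2_eval₂_eq_zero :
    (g2 R f₁ f₂).eval₂ ((AdjoinRoot.of (F2E R L f₁ f₂)).comp (psi1 R L f₁))
      (AdjoinRoot.root (F2E R L f₁ f₂)) = 0 := by
  rw [Polynomial.eval₂_map, RingHom.comp_assoc, AdjoinRoot.algebraMap_eq, psi1_comp_of]
  rw [← Polynomial.eval₂_map]
  exact AdjoinRoot.eval₂_root _

/-- The map `S → F` (on AdjoinRoot models). -/
def psi : AdjoinRoot (g2 R f₁ f₂) →+* AdjoinRoot (F2E R L f₁ f₂) :=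
  AdjoinRoot.lift ((AdjoinRoot.of _).comp (psi1 R L f₁)) (AdjoinRoot.root _)
    (g2_eval₂_eq_zero R L f₁ f₂)

@[simp] lemma psi_root : psi R L f₁ f₂ (root (g2 R f₁ f₂)) = root (F2E R L f₁ f₂) :=
  AdjoinRoot.lift_root _

@[simp] lemma psi_of (x : AdjoinRoot f₁) :
    psi R L f₁ f₂ (of (g2 R f₁ f₂) x) = of (F2E R L f₁ f₂) (psi1 R L f₁ x) :=
  AdjoinRoot.lift_of _

lemma psi_smul (r : R) (x : AdjoinRoot (g2 R f₁ f₂)) :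
    psi R L f₁ f₂ (r • x) = algebraMap R L r • psi R L f₁ f₂ x := by
  rw [Algebra.smul_def, Algebra.smul_def, map_mul]
  congr 1
  rw [IsScalarTower.algebraMap_apply R (AdjoinRoot f₁) (AdjoinRoot (g2 R f₁ f₂)),
    AdjoinRoot.algebraMap_eq, psi_of, AdjoinRoot.algebraMap_eq, psi1_of]
  rfl

lemma nontrivial_S1 (h₁d : 0 < f₁.natDegree) : Nontrivial (AdjoinRoot f₁) :=
  AdjoinRoot.nontrivial f₁ (ne_of_gt (Polynomial.natDegree_pos_iff_degree_pos.mp h₁d))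

lemma nontrivial_E (h₁m : f₁.Monic) (h₁d : 0 < f₁.natDegree) :
    Nontrivial (AdjoinRoot (f₁L R L f₁)) :=
  AdjoinRoot.nontrivial _ (by
    rw [h₁m.degree_map]
    exact ne_of_gt (Polynomial.natDegree_pos_iff_degree_pos.mp h₁d))

/-- Basis of `S = AdjoinRoot (g2)` over `R`. -/
def bS (h₁m : f₁.Monic) (h₂m : f₂.Monic) (hd : (g2 R f₁ f₂).natDegree = f₂.natDegree) :
    Module.Basis (Fin f₁.natDegree × Fin f₂.natDegree) R (AdjoinRoot (g2 R f₁ f₂)) :=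
  (((AdjoinRoot.powerBasis' h₁m).basis.smulTower
      (AdjoinRoot.powerBasis' (h₂m.map (algebraMap R (AdjoinRoot f₁)))).basis).reindex
    (Equiv.prodCongr (finCongr (AdjoinRoot.powerBasis'_dim _))
      (finCongr ((AdjoinRoot.powerBasis'_dim _).trans hd))))

/-- Basis of `F = AdjoinRoot (F2E)` over `L`. -/
def cF (h₁m : f₁.Monic) (h₂m : f₂.Monic) (hd1 : (f₁L R L f₁).natDegree = f₁.natDegree)
    (hd2 : (F2E R L f₁ f₂).natDegree = f₂.natDegree) :
    Module.Basis (Fin f₁.natDegree × Fin f₂.natDegree) L (AdjoinRoot (F2E R L f₁ f₂)) :=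
  (((AdjoinRoot.powerBasis' (h₁m.map (algebraMap R L))).basis.smulTower
      (AdjoinRoot.powerBasis' (h₂m.map ((AdjoinRoot.of (f₁L R L f₁)).comp (algebraMap R L)))).basis).reindex
    (Equiv.prodCongr (finCongr ((AdjoinRoot.powerBasis'_dim _).trans hd1))
      (finCongr ((AdjoinRoot.powerBasis'_dim _).trans hd2))))

lemma psi_basis (h₁m : f₁.Monic) (h₂m : f₂.Monic) (hd : (g2 R f₁ f₂).natDegree = f₂.natDegree)
    (hd1 : (f₁L R L f₁).natDegree = f₁.natDegree)
    (hd2 : (F2E R L f₁ f₂).natDegree = f₂.natDegree)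
    (p : Fin f₁.natDegree × Fin f₂.natDegree) :
    psi R L f₁ f₂ (bS R f₁ f₂ h₁m h₂m hd p) = cF R L f₁ f₂ h₁m h₂m hd1 hd2 p := by
  obtain ⟨i, j⟩ := p
  rw [bS, Module.Basis.reindex_apply]
  erw [Module.Basis.smulTower_apply]
  simp only [cF, Module.Basis.reindex_apply, Equiv.prodCongr_symm, Equiv.prodCongr_apply,
    Prod.map_apply, finCongr_symm, finCongr_apply, Module.Basis.smulTower_apply,
    PowerBasis.basis_eq_pow, AdjoinRoot.powerBasis'_gen, Fin.coe_cast]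
  erw [Algebra.smul_def, map_mul, Algebra.smul_def]
  congr 1
  · erw [psi_of R L f₁ f₂ (root f₁ ^ (i : ℕ)), map_pow, psi1_root]
    rfl
  · erw [map_pow, psi_root]

lemma hd_g2 (h₂m : f₂.Monic) (h₁d : 0 < f₁.natDegree) :
    (g2 R f₁ f₂).natDegree = f₂.natDegree :=
  haveI := nontrivial_S1 R f₁ h₁d
  h₂m.natDegree_map _

lemma hd_f1L (h₁m : f₁.Monic) : (f₁L R L f₁).natDegree = f₁.natDegree :=
  h₁m.natDegree_map _

lemma hd_F2E (h₁m : f₁.Monic) (h₂m : f₂.Monic) (h₁d : 0 < f₁.natDegree) :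
    (F2E R L f₁ f₂).natDegree = f₂.natDegree :=
  haveI := nontrivial_E R L f₁ h₁m h₁d
  h₂m.natDegree_map _

lemma psi_injective (h₁m : f₁.Monic) (h₂m : f₂.Monic) (h₁d : 0 < f₁.natDegree) :
    Function.Injective (psi R L f₁ f₂) :=
  aux_inj (psi R L f₁ f₂) (bS R f₁ f₂ h₁m h₂m (hd_g2 R f₁ f₂ h₂m h₁d))
    (cF R L f₁ f₂ h₁m h₂m (hd_f1L R L f₁ h₁m) (hd_F2E R L f₁ f₂ h₁m h₂m h₁d))
    (psi_smul R L f₁ f₂)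
    (psi_basis R L f₁ f₂ h₁m h₂m _ _ _)

lemma nontrivial_F (h₁m : f₁.Monic) (h₂m : f₂.Monic) (h₁d : 0 < f₁.natDegree)
    (h₂d : 0 < f₂.natDegree) : Nontrivial (AdjoinRoot (F2E R L f₁ f₂)) :=
  nontrivial_of_ne _ 0
    ((cF R L f₁ f₂ h₁m h₂m (hd_f1L R L f₁ h₁m) (hd_F2E R L f₁ f₂ h₁m h₂m h₁d)).ne_zero
      (⟨0, h₁d⟩, ⟨0, h₂d⟩))

lemma isDomain_S_iff_isDomain_F (h₁m : f₁.Monic) (h₂m : f₂.Monic) (h₁d : 0 < f₁.natDegree)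
    (h₂d : 0 < f₂.natDegree) :
    IsDomain (AdjoinRoot (g2 R f₁ f₂)) ↔ IsDomain (AdjoinRoot (F2E R L f₁ f₂)) := by
  constructor
  · intro hS
    haveI := nontrivial_F R L f₁ f₂ h₁m h₂m h₁d h₂d
    haveI : NoZeroDivisors (AdjoinRoot (F2E R L f₁ f₂)) := by
      refine ⟨fun {z w} hzw => ?_⟩
      obtain ⟨r, hr, t, ht⟩ := aux_denom (psi R L f₁ f₂)
        (bS R f₁ f₂ h₁m h₂m (hd_g2 R f₁ f₂ h₂m h₁d))
        (cF R L f₁ f₂ h₁m h₂m (hd_f1L R L f₁ h₁m) (hd_F2E R L f₁ f₂ h₁m h₂m h₁d))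
        (psi_smul R L f₁ f₂) (psi_basis R L f₁ f₂ h₁m h₂m _ _ _) z
      obtain ⟨r', hr', t', ht'⟩ := aux_denom (psi R L f₁ f₂)
        (bS R f₁ f₂ h₁m h₂m (hd_g2 R f₁ f₂ h₂m h₁d))
        (cF R L f₁ f₂ h₁m h₂m (hd_f1L R L f₁ h₁m) (hd_F2E R L f₁ f₂ h₁m h₂m h₁d))
        (psi_smul R L f₁ f₂) (psi_basis R L f₁ f₂ h₁m h₂m _ _ _) w
      have h0 : psi R L f₁ f₂ (t * t') = 0 := by
        rw [map_mul, ← ht, ← ht', smul_mul_smul_comm, hzw, smul_zero]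
      have htt : t * t' = 0 :=
        psi_injective R L f₁ f₂ h₁m h₂m h₁d (by rw [h0, map_zero])
      have hu : ∀ a : R, a ≠ 0 →
          IsUnit (algebraMap L (AdjoinRoot (F2E R L f₁ f₂)) (algebraMap R L a)) := fun a ha =>
        (isUnit_iff_ne_zero.mpr fun h0' =>
          ha (IsFractionRing.injective R L (by rw [h0', map_zero]))).map _
      rcases mul_eq_zero.mp htt with h | h
      · left
        rw [h, map_zero] at ht
        rw [Algebra.smul_def] at ht
        exact ((hu r hr).mul_right_eq_zero).mp ht
      · right
        rw [h, map_zero] at ht'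
        rw [Algebra.smul_def] at ht'
        exact ((hu r' hr').mul_right_eq_zero).mp ht'
    exact NoZeroDivisors.to_isDomain _
  · intro hF
    exact Function.Injective.isDomain (psi R L f₁ f₂) (psi_injective R L f₁ f₂ h₁m h₂m h₁d)

lemma finite_F (h₁m : f₁.Monic) (h₂m : f₂.Monic) :
    Module.Finite L (AdjoinRoot (F2E R L f₁ f₂)) := by
  haveI : Module.Finite L (AdjoinRoot (f₁L R L f₁)) :=
    (AdjoinRoot.powerBasis' (h₁m.map (algebraMap R L))).finite
  haveI : Module.Finite (AdjoinRoot (f₁L R L f₁)) (AdjoinRoot (F2E R L f₁ f₂)) :=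
    (AdjoinRoot.powerBasis' (h₂m.map ((AdjoinRoot.of (f₁L R L f₁)).comp (algebraMap R L)))).finite
  exact Module.Finite.trans (AdjoinRoot (f₁L R L f₁)) (AdjoinRoot (F2E R L f₁ f₂))

lemma isField_F_of_isDomain_F (h₁m : f₁.Monic) (h₂m : f₂.Monic)
    (h : IsDomain (AdjoinRoot (F2E R L f₁ f₂))) : IsField (AdjoinRoot (F2E R L f₁ f₂)) := by
  haveI := h
  haveI := finite_F R L f₁ f₂ h₁m h₂m
  haveI : Algebra.IsIntegral L (AdjoinRoot (F2E R L f₁ f₂)) := Algebra.IsIntegral.of_finite L _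
  exact isField_of_isIntegral_of_isField' (Field.toIsField L)

lemma algebraMap_EF_injective (h₁m : f₁.Monic) (h₂m : f₂.Monic) (h₁d : 0 < f₁.natDegree)
    (h₂d : 0 < f₂.natDegree) :
    Function.Injective
      (algebraMap (AdjoinRoot (f₁L R L f₁)) (AdjoinRoot (F2E R L f₁ f₂))) := by
  set pb := AdjoinRoot.powerBasis'
    (h₂m.map ((AdjoinRoot.of (f₁L R L f₁)).comp (algebraMap R L))) with hpb
  have hi0 : 0 < pb.dim := by
    rw [hpb, AdjoinRoot.powerBasis'_dim, hd_F2E R L f₁ f₂ h₁m h₂m h₁d]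
    exact h₂d
  rw [injective_iff_map_eq_zero]
  intro e he
  have h2 : (1 : AdjoinRoot (F2E R L f₁ f₂)) = pb.basis ⟨0, hi0⟩ := by
    rw [pb.basis_eq_pow]
    simp
  have h3 : e • pb.basis ⟨0, hi0⟩ = 0 := by
    rw [← h2, Algebra.smul_def, mul_one]
    exact he
  have h4 := congrArg (fun x => pb.basis.repr x ⟨0, hi0⟩) h3
  simp only [map_smul, Finsupp.smul_apply, Module.Basis.repr_self, smul_eq_mul, map_zero,
    Finsupp.coe_zero, Pi.zero_apply, Finsupp.single_eq_same, mul_one] at h4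
  exact h4

lemma isField_E_of_isField_F (h₁m : f₁.Monic) (h₂m : f₂.Monic) (h₁d : 0 < f₁.natDegree)
    (h₂d : 0 < f₂.natDegree) (h : IsField (AdjoinRoot (F2E R L f₁ f₂))) :
    IsField (AdjoinRoot (f₁L R L f₁)) := by
  letI := h.toField
  haveI : IsDomain (AdjoinRoot (f₁L R L f₁)) :=
    Function.Injective.isDomain _ (algebraMap_EF_injective R L f₁ f₂ h₁m h₂m h₁d h₂d)
  haveI : Module.Finite L (AdjoinRoot (f₁L R L f₁)) :=
    (AdjoinRoot.powerBasis' (h₁m.map (algebraMap R L))).finite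
  haveI : Algebra.IsIntegral L (AdjoinRoot (f₁L R L f₁)) := Algebra.IsIntegral.of_finite L _
  exact isField_of_isIntegral_of_isField' (Field.toIsField L)

lemma isField_E_iff (h₁m : f₁.Monic) :
    IsField (AdjoinRoot (f₁L R L f₁)) ↔ Irreducible (f₁L R L f₁) := by
  constructor
  · intro hfield
    have hmax : (Ideal.span {f₁L R L f₁}).IsMaximal :=
      Ideal.Quotient.maximal_of_isField _ hfield
    have hne : f₁L R L f₁ ≠ 0 := (h₁m.map (algebraMap R L)).ne_zero
    exact ((Ideal.span_singleton_prime hne).mp hmax.isPrime).irreducible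
  · intro hirr
    exact (Ideal.Quotient.maximal_ideal_iff_isField_quotient _).mp
      (PrincipalIdealRing.isMaximal_of_irreducible hirr)

lemma isField_F_iff (h₂m : f₂.Monic) (h₁d : 0 < f₁.natDegree)
    (hE : IsField (AdjoinRoot (f₁L R L f₁))) :
    IsField (AdjoinRoot (F2E R L f₁ f₂)) ↔ Irreducible (F2E R L f₁ f₂) := by
  letI := hE.toField
  constructor
  · intro hfield
    have hmax : (Ideal.span {F2E R L f₁ f₂}).IsMaximal :=
      Ideal.Quotient.maximal_of_isField _ hfield
    have hne : F2E R L f₁ f₂ ≠ 0 :=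
      (h₂m.map ((AdjoinRoot.of (f₁L R L f₁)).comp (algebraMap R L))).ne_zero
    exact ((Ideal.span_singleton_prime hne).mp hmax.isPrime).irreducible
  · intro hirr
    exact (Ideal.Quotient.maximal_ideal_iff_isField_quotient _).mp
      (PrincipalIdealRing.isMaximal_of_irreducible hirr)

/-- Evaluation map from the polynomial ring to the AdjoinRoot tower. -/
def theta : MvPolynomial (Fin 2) R →+* AdjoinRoot (g2 R f₁ f₂) :=
  MvPolynomial.eval₂Hom (algebraMap R (AdjoinRoot (g2 R f₁ f₂)))
    ![AdjoinRoot.of (g2 R f₁ f₂) (AdjoinRoot.root f₁), AdjoinRoot.root (g2 R f₁ f₂)]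

@[simp] lemma theta_C (r : R) :
    theta R f₁ f₂ (MvPolynomial.C r) = algebraMap R (AdjoinRoot (g2 R f₁ f₂)) r :=
  MvPolynomial.eval₂Hom_C _ _ _

@[simp] lemma theta_X0 :
    theta R f₁ f₂ (MvPolynomial.X 0) = AdjoinRoot.of (g2 R f₁ f₂) (AdjoinRoot.root f₁) := by
  simp [theta]

@[simp] lemma theta_X1 :
    theta R f₁ f₂ (MvPolynomial.X 1) = AdjoinRoot.root (g2 R f₁ f₂) := by
  simp [theta]

lemma theta_comp_C :
    (theta R f₁ f₂).comp (MvPolynomial.C : R →+* MvPolynomial (Fin 2) R) =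
      (AdjoinRoot.of (g2 R f₁ f₂)).comp (AdjoinRoot.of f₁) :=
  RingHom.ext fun r => by simp [AdjoinRoot.algebraMap_eq', AdjoinRoot.algebraMap_eq]

lemma theta_gen1 : theta R f₁ f₂ (Polynomial.aeval (MvPolynomial.X 0) f₁) = 0 := by
  rw [Polynomial.aeval_def, Polynomial.hom_eval₂, MvPolynomial.algebraMap_eq, theta_comp_C,
    theta_X0, ← Polynomial.hom_eval₂, AdjoinRoot.eval₂_root, map_zero]

lemma theta_gen2 : theta R f₁ f₂ (Polynomial.aeval (MvPolynomial.X 1) f₂) = 0 := by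
  rw [Polynomial.aeval_def, Polynomial.hom_eval₂, MvPolynomial.algebraMap_eq, theta_comp_C,
    theta_X1, ← Polynomial.eval₂_map]
  exact AdjoinRoot.eval₂_root _

lemma span_le_ker_theta :
    (Ideal.span {Polynomial.aeval (MvPolynomial.X 0) f₁, Polynomial.aeval (MvPolynomial.X 1) f₂} :
      Ideal (MvPolynomial (Fin 2) R)) ≤ RingHom.ker (theta R f₁ f₂) := by
  rw [Ideal.span_le]
  rintro x hx
  rcases hx with rfl | hx
  · exact theta_gen1 R f₁ f₂
  · rw [Set.mem_singleton_iff] at hx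
    subst hx
    exact theta_gen2 R f₁ f₂

/-- `T → S`. -/
def eT : Tring R f₁ f₂ →+* AdjoinRoot (g2 R f₁ f₂) :=
  Ideal.Quotient.lift _ (theta R f₁ f₂) (fun a ha => span_le_ker_theta R f₁ f₂ ha)

lemma chi1_aux :
    f₁.eval₂ ((Ideal.Quotient.mk _).comp (MvPolynomial.C : R →+* MvPolynomial (Fin 2) R) :
        R →+* Tring R f₁ f₂)
      (Ideal.Quotient.mk _ (MvPolynomial.X 0)) = 0 := by
  rw [← Polynomial.hom_eval₂, ← MvPolynomial.algebraMap_eq, ← Polynomial.aeval_def]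
  exact Ideal.Quotient.eq_zero_iff_mem.mpr (Ideal.subset_span (by simp))

/-- `R[x₁]/(f₁) → T`. -/
def chi1 : AdjoinRoot f₁ →+* Tring R f₁ f₂ :=
  AdjoinRoot.lift ((Ideal.Quotient.mk _).comp MvPolynomial.C)
    (Ideal.Quotient.mk _ (MvPolynomial.X 0)) (chi1_aux R f₁ f₂)

lemma chi1_comp_of :
    (chi1 R f₁ f₂).comp (AdjoinRoot.of f₁) =
      (Ideal.Quotient.mk _).comp (MvPolynomial.C : R →+* MvPolynomial (Fin 2) R) :=
  AdjoinRoot.lift_comp_of _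

lemma chi_aux :
    (g2 R f₁ f₂).eval₂ (chi1 R f₁ f₂) (Ideal.Quotient.mk _ (MvPolynomial.X 1)) = 0 := by
  rw [Polynomial.eval₂_map, AdjoinRoot.algebraMap_eq, chi1_comp_of,
    ← Polynomial.hom_eval₂, ← MvPolynomial.algebraMap_eq, ← Polynomial.aeval_def]
  exact Ideal.Quotient.eq_zero_iff_mem.mpr (Ideal.subset_span (by simp))

/-- `S → T`. -/
def chi : AdjoinRoot (g2 R f₁ f₂) →+* Tring R f₁ f₂ :=
  AdjoinRoot.lift (chi1 R f₁ f₂) (Ideal.Quotient.mk _ (MvPolynomial.X 1)) (chi_aux R f₁ f₂)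

@[simp] lemma eT_mk (x : MvPolynomial (Fin 2) R) :
    eT R f₁ f₂ (Ideal.Quotient.mk _ x) = theta R f₁ f₂ x := rfl

@[simp] lemma chi_of (x : AdjoinRoot f₁) :
    chi R f₁ f₂ (AdjoinRoot.of (g2 R f₁ f₂) x) = chi1 R f₁ f₂ x :=
  AdjoinRoot.lift_of _

@[simp] lemma chi_root :
    chi R f₁ f₂ (AdjoinRoot.root (g2 R f₁ f₂)) = Ideal.Quotient.mk _ (MvPolynomial.X 1) :=
  AdjoinRoot.lift_root _

@[simp] lemma chi1_of (r : R) :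
    chi1 R f₁ f₂ (AdjoinRoot.of f₁ r) = Ideal.Quotient.mk _ (MvPolynomial.C r) :=
  AdjoinRoot.lift_of _

@[simp] lemma chi1_root :
    chi1 R f₁ f₂ (AdjoinRoot.root f₁) = Ideal.Quotient.mk _ (MvPolynomial.X 0) :=
  AdjoinRoot.lift_root _

lemma chi_comp_eT : (chi R f₁ f₂).comp (eT R f₁ f₂) = RingHom.id (Tring R f₁ f₂) := by
  apply Ideal.Quotient.ringHom_ext
  apply MvPolynomial.ringHom_ext
  · intro r
    simp only [RingHom.comp_apply, RingHom.id_apply, eT_mk, theta_C,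
      AdjoinRoot.algebraMap_eq', AdjoinRoot.algebraMap_eq, chi_of, chi1_of,
      Algebra.algebraMap_self]
  · intro i
    fin_cases i
    · show (chi R f₁ f₂) ((eT R f₁ f₂) (Ideal.Quotient.mk _ (MvPolynomial.X 0))) =
        Ideal.Quotient.mk _ (MvPolynomial.X 0)
      simp only [eT_mk, theta_X0, chi_of, chi1_root]
    · show (chi R f₁ f₂) ((eT R f₁ f₂) (Ideal.Quotient.mk _ (MvPolynomial.X 1))) =
        Ideal.Quotient.mk _ (MvPolynomial.X 1)
      simp only [eT_mk, theta_X1, chi_root]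

lemma eT_comp_chi1 :
    (eT R f₁ f₂).comp (chi1 R f₁ f₂) = AdjoinRoot.of (g2 R f₁ f₂) := by
  apply Ideal.Quotient.ringHom_ext
  apply Polynomial.ringHom_ext'
  · ext r
    show (eT R f₁ f₂) ((chi1 R f₁ f₂) (AdjoinRoot.of f₁ r)) =
      AdjoinRoot.of (g2 R f₁ f₂) (AdjoinRoot.of f₁ r)
    rw [chi1_of, eT_mk, theta_C]
    rfl
  · show (eT R f₁ f₂) ((chi1 R f₁ f₂) (AdjoinRoot.root f₁)) =
      AdjoinRoot.of (g2 R f₁ f₂) (AdjoinRoot.root f₁)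
    rw [chi1_root, eT_mk, theta_X0]

lemma eT_comp_chi :
    (eT R f₁ f₂).comp (chi R f₁ f₂) = RingHom.id (AdjoinRoot (g2 R f₁ f₂)) := by
  apply Ideal.Quotient.ringHom_ext
  apply Polynomial.ringHom_ext'
  · change (eT R f₁ f₂).comp ((chi R f₁ f₂).comp (AdjoinRoot.of (g2 R f₁ f₂))) = _
    rw [show (chi R f₁ f₂).comp (AdjoinRoot.of (g2 R f₁ f₂)) = chi1 R f₁ f₂ from
      AdjoinRoot.lift_comp_of _]
    rw [eT_comp_chi1]
    rfl
  · show (eT R f₁ f₂) ((chi R f₁ f₂) (AdjoinRoot.root (g2 R f₁ f₂))) =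
      AdjoinRoot.root (g2 R f₁ f₂)
    simp only [chi_root, eT_mk, theta_X1]

/-- The ring equivalence `T ≃ S`. -/
def equivTS : Tring R f₁ f₂ ≃+* AdjoinRoot (g2 R f₁ f₂) :=
  RingEquiv.ofRingHom (eT R f₁ f₂) (chi R f₁ f₂) (eT_comp_chi R f₁ f₂) (chi_comp_eT R f₁ f₂)

end Concrete

/-- **Domain criterion.** Let `R` be a UFD with fraction field `L`, and let
`f₁ ∈ R[x₁]`, `f₂ ∈ R[x₂]` be monic of positive degree.  Set
`T = R[x₁,x₂]/(f₁(x₁), f₂(x₂))`, `E = L[x₁]/(f₁)` and `F = E[x₂]/(f₂)`.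
Then `T` is an integral domain iff `E` and `F` are both fields, that is,
iff `f₁` is irreducible in `L[x₁]` and `f₂` is irreducible in `E[x₂]`. -/
theorem stmt0 (R L : Type) [CommRing R] [IsDomain R] [UniqueFactorizationMonoid R]
    [Field L] [Algebra R L] [IsFractionRing R L]
    (f₁ f₂ : R[X]) (h₁m : f₁.Monic) (h₂m : f₂.Monic)
    (h₁d : 0 < f₁.natDegree) (h₂d : 0 < f₂.natDegree) :
    (IsDomain (Tring R f₁ f₂) ↔ (IsField (Ering R L f₁) ∧ IsField (Fring R L f₁ f₂))) ∧
    (IsDomain (Tring R f₁ f₂) ↔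
      (Irreducible (f₁L R L f₁) ∧ Irreducible (f₂E R L f₁ f₂))) := by
  have hdomTS : IsDomain (Tring R f₁ f₂) ↔ IsDomain (AdjoinRoot (g2 R f₁ f₂)) := by
    constructor
    · intro h
      haveI := h
      exact Function.Injective.isDomain (equivTS R f₁ f₂).symm.toRingHom
        (equivTS R f₁ f₂).symm.injective
    · intro h
      haveI := h
      exact Function.Injective.isDomain (equivTS R f₁ f₂).toRingHom
        (equivTS R f₁ f₂).injective
  have h1 : IsDomain (Tring R f₁ f₂) ↔ IsDomain (AdjoinRoot (F2E R L f₁ f₂)) :=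
    hdomTS.trans (isDomain_S_iff_isDomain_F R L f₁ f₂ h₁m h₂m h₁d h₂d)
  have h2 : IsDomain (AdjoinRoot (F2E R L f₁ f₂)) ↔
      (IsField (AdjoinRoot (f₁L R L f₁)) ∧ IsField (AdjoinRoot (F2E R L f₁ f₂))) := by
    constructor
    · intro h
      have hF := isField_F_of_isDomain_F R L f₁ f₂ h₁m h₂m h
      exact ⟨isField_E_of_isField_F R L f₁ f₂ h₁m h₂m h₁d h₂d hF, hF⟩
    · rintro ⟨-, hF⟩
      letI := hF.toField
      infer_instance
  have h3 : (IsField (AdjoinRoot (f₁L R L f₁)) ∧ IsField (AdjoinRoot (F2E R L f₁ f₂))) ↔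
      (Irreducible (f₁L R L f₁) ∧ Irreducible (F2E R L f₁ f₂)) := by
    constructor
    · rintro ⟨hE, hF⟩
      exact ⟨(isField_E_iff R L f₁ h₁m).mp hE, (isField_F_iff R L f₁ f₂ h₂m h₁d hE).mp hF⟩
    · rintro ⟨hi1, hi2⟩
      have hE := (isField_E_iff R L f₁ h₁m).mpr hi1
      exact ⟨hE, (isField_F_iff R L f₁ f₂ h₂m h₁d hE).mpr hi2⟩
  exact ⟨h1.trans h2, (h1.trans h2).trans h3⟩
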